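/- Consider an arbitrary-length evolution where at each round a single winner's stake increases by a fixed β > 0 and the winner is always drawn from a fixed proper subset A of players. Then the Nakamoto coefficient with threshold τ ∈ (0,1) eventually becomes at most |A|: there exists T such that for all t ≥ T, d(σ^t) ≤ |A|. -/

import Mathlib

open Finset

/-- Nakamoto coefficient of the stake profile `σ` restricted to the player set `N`,
with threshold `τ`: the minimum size of a coalition `C ⊆ N` whose total stake strictly
exceeds `τ` times the total stake of `N`. -/
noncomputable def nakamoto {n : ℕ} (σ : Fin n → ℝ) (N : Finset (Fin n)) (τ : ℝ) : ℕ :=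
  sInf {k : ℕ | ∃ C ⊆ N, C.card = k ∧ τ * ∑ j ∈ N, σ j < ∑ j ∈ C, σ j}

theorem stmt15 {n : ℕ} (τ : ℝ) (hτ0 : 0 < τ) (hτ1 : τ < 1)
    (A : Finset (Fin n)) (hA : A.Nonempty) (hAne : A ≠ Finset.univ)
    (β : ℝ) (hβ : 0 < β)
    (σ : ℕ → Fin n → ℝ) (hσ0 : ∀ i, 0 ≤ σ 0 i) (hpos : 0 < ∑ i, σ 0 i)
    (w : ℕ → Fin n) (hw : ∀ t, w t ∈ A)
    (hupd : ∀ t i, σ (t + 1) i = σ t i + if i = w t then β else 0) :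
    ∃ T : ℕ, ∀ t, T ≤ t → nakamoto (σ t) Finset.univ τ ≤ A.card := by
  have hsumA : ∀ t, ∑ j ∈ A, σ t j = ∑ j ∈ A, σ 0 j + t * β := by
    intro t
    induction t with
    | zero => simp
    | succ t ih =>
      have : ∀ j ∈ A, σ (t + 1) j = σ t j + if j = w t then β else 0 :=
        fun j _ => hupd t j
      rw [Finset.sum_congr rfl this, Finset.sum_add_distrib, ih,
        Finset.sum_ite_eq' A (w t) (fun _ => β)]
      simp [hw t]
      push_cast
      ring
  have hsumU : ∀ t, ∑ j ∈ (Finset.univ : Finset (Fin n)), σ t j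
      = ∑ j, σ 0 j + t * β := by
    intro t
    induction t with
    | zero => simp
    | succ t ih =>
      have : ∀ j ∈ (Finset.univ : Finset (Fin n)),
          σ (t + 1) j = σ t j + if j = w t then β else 0 := fun j _ => hupd t j
      rw [Finset.sum_congr rfl this, Finset.sum_add_distrib, ih,
        Finset.sum_ite_eq' Finset.univ (w t) (fun _ => β)]
      simp
      push_cast
      ring
  set S0 := ∑ j, σ 0 j with hS0
  have hA0 : 0 ≤ ∑ j ∈ A, σ 0 j := Finset.sum_nonneg fun j _ => hσ0 j
  obtain ⟨T, hT⟩ := exists_nat_gt (τ * S0 / (β * (1 - τ)))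
  refine ⟨T, fun t ht => ?_⟩
  have ht' : τ * S0 / (β * (1 - τ)) < (t : ℝ) := lt_of_lt_of_le hT (by exact_mod_cast ht)
  have hb1 : 0 < β * (1 - τ) := mul_pos hβ (by linarith)
  have key : τ * (S0 + t * β) < ∑ j ∈ A, σ 0 j + t * β := by
    have := (div_lt_iff₀ hb1).mp ht'
    nlinarith
  apply Nat.sInf_le
  refine ⟨A, Finset.subset_univ A, rfl, ?_⟩
  rw [hsumU t, hsumA t]
  exact key
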